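/- Let r > 0 and s ∈ (0, r+d), and let X be an ℝ^d-valued random variable with distribution P = f·λ_d such that E|X|^{r+η} < ∞ for some η > 0. Let (α_n)_{n≥1} be an L^r(P)-optimal sequence of quantizers, and let θ > 0, μ ∈ ℝ^d be such that (θ,μ) is P-admissible and hypotheses (H1) and (H2) hold. Then there exists b ∈ (0,1/2) such that ∫_{ℝ^d} ψ_b^{s/(d+r)} dP_{θ,μ} < ∞. -/

import Mathlib

open MeasureTheory ENNReal Filter Set Metric Topology
open scoped Classical

noncomputable section

/-- Distance from a point `x` to a finite codebook `α`. -/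
def qdist {d : ℕ} (x : EuclideanSpace ℝ (Fin d)) (α : Finset (EuclideanSpace ℝ (Fin d))) : ℝ :=
  Metric.infDist x (α : Set (EuclideanSpace ℝ (Fin d)))

/-- The `r`-th power `L^r` quantization error `∫ d(x,α)^r dP` of a codebook `α`. -/
def qerr {d : ℕ} (P : Measure (EuclideanSpace ℝ (Fin d))) (r : ℝ)
    (α : Finset (EuclideanSpace ℝ (Fin d))) : ℝ≥0∞ :=
  ∫⁻ x, ENNReal.ofReal (qdist x α) ^ r ∂P

/-- The optimal `n`-level `L^r` quantization error `e_{n,r}(P)`. -/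
def enr {d : ℕ} (P : Measure (EuclideanSpace ℝ (Fin d))) (r : ℝ) (n : ℕ) : ℝ≥0∞ :=
  ⨅ (α : Finset (EuclideanSpace ℝ (Fin d))) (_ : α.Nonempty) (_ : α.card ≤ n),
    qerr P r α ^ (1 / r)

/-- The uniform distribution on the unit cube `[0,1]^d`. -/
def unifCube (d : ℕ) : Measure (EuclideanSpace ℝ (Fin d)) :=
  volume.restrict {x | ∀ i, x i ∈ Icc (0 : ℝ) 1}

/-- The constant `J_{r,d} = inf_{n ≥ 1} n^{r/d} e_{n,r}(U([0,1]^d))^r`. -/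
def Jrd (r : ℝ) (d : ℕ) : ℝ≥0∞ :=
  ⨅ (n : ℕ) (_ : 1 ≤ n), (n : ℝ≥0∞) ^ (r / (d : ℝ)) * enr (unifCube d) r n ^ r

/-- Zador's constant `Q_r(P)` for a measure whose a.c. part has density `f`. -/
def Qr {d : ℕ} (f : EuclideanSpace ℝ (Fin d) → ℝ) (r : ℝ) : ℝ≥0∞ :=
  Jrd r d * (∫⁻ x, ENNReal.ofReal (f x) ^ ((d : ℝ) / ((d : ℝ) + r))) ^ (((d : ℝ) + r) / (d : ℝ))

/-- The dilated/contracted codebook `α^{θ,μ} = μ + θ(α - μ)`. -/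
def dilate {d : ℕ} (α : Finset (EuclideanSpace ℝ (Fin d))) (θ : ℝ)
    (μ : EuclideanSpace ℝ (Fin d)) : Finset (EuclideanSpace ℝ (Fin d)) :=
  α.image fun a => μ + θ • (a - μ)

/-- `f_{θ,μ}(x) = f(μ + θ(x-μ))`. -/
def fdil {d : ℕ} (f : EuclideanSpace ℝ (Fin d) → ℝ) (θ : ℝ)
    (μ x : EuclideanSpace ℝ (Fin d)) : ℝ :=
  f (μ + θ • (x - μ))

/-- The image measure `P_{θ,μ}` of `P` under `x ↦ (x-μ)/θ + μ`. -/
def Pdil {d : ℕ} (P : Measure (EuclideanSpace ℝ (Fin d))) (θ : ℝ)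
    (μ : EuclideanSpace ℝ (Fin d)) : Measure (EuclideanSpace ℝ (Fin d)) :=
  Measure.map (fun x => μ + θ⁻¹ • (x - μ)) P

/-- `(θ,μ)` is `P`-admissible for `P = f·λ_d`:
`{f>0} ⊆ μ(1-θ) + θ{f>0}` up to a `λ_d`-null set.  (Note that
`x ∈ μ(1-θ) + θ{f>0}` iff `f((x-μ)/θ + μ) > 0`.) -/
def Admissible {d : ℕ} (f : EuclideanSpace ℝ (Fin d) → ℝ) (θ : ℝ)
    (μ : EuclideanSpace ℝ (Fin d)) : Prop :=
  ∀ᵐ x ∂(volume : Measure (EuclideanSpace ℝ (Fin d))),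
    0 < f x → 0 < f (μ + θ⁻¹ • (x - μ))

/-- The maximal function `ψ_b` attached to `P` and the sequence of codebooks `α`. -/
def maxFun {d : ℕ} (P : Measure (EuclideanSpace ℝ (Fin d)))
    (α : ℕ → Finset (EuclideanSpace ℝ (Fin d))) (b : ℝ)
    (x : EuclideanSpace ℝ (Fin d)) : ℝ≥0∞ :=
  ⨆ (n : ℕ) (_ : 1 ≤ n),
    volume (Metric.ball x (b * qdist x (α n))) / P (Metric.ball x (b * qdist x (α n)))

/-- An `L^r(P)`-optimal sequence of `n`-quantizers. -/
def OptimalSeq {d : ℕ} (P : Measure (EuclideanSpace ℝ (Fin d))) (r : ℝ)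
    (α : ℕ → Finset (EuclideanSpace ℝ (Fin d))) : Prop :=
  ∀ n, 1 ≤ n → (α n).Nonempty ∧ (α n).card ≤ n ∧ qerr P r (α n) = enr P r n ^ r

/-- An asymptotically `L^r(P)`-optimal sequence of quantizers,
for `P` whose a.c. part has density `f`. -/
def AsympOptimalSeq {d : ℕ} (P : Measure (EuclideanSpace ℝ (Fin d)))
    (f : EuclideanSpace ℝ (Fin d) → ℝ) (r : ℝ)
    (α : ℕ → Finset (EuclideanSpace ℝ (Fin d))) : Prop :=
  (∀ n, 1 ≤ n → (α n).Nonempty ∧ (α n).card ≤ n) ∧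
  Tendsto (fun n : ℕ => (n : ℝ≥0∞) ^ (r / (d : ℝ)) * qerr P r (α n)) atTop (𝓝 (Qr f r))

/-- `L^s(P)`-rate-optimality of a sequence of codebooks. -/
def RateOptimal {d : ℕ} (P : Measure (EuclideanSpace ℝ (Fin d))) (s : ℝ)
    (β : ℕ → Finset (EuclideanSpace ℝ (Fin d))) : Prop :=
  limsup (fun n : ℕ => (n : ℝ≥0∞) ^ (s / (d : ℝ)) * qerr P s (β n)) atTop < ⊤

/-- The support of a measure. -/
def msupp {d : ℕ} (P : Measure (EuclideanSpace ℝ (Fin d))) : Set (EuclideanSpace ℝ (Fin d)) :=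
  {x | ∀ ε > 0, 0 < P (Metric.ball x ε)}

/-- Hypothesis (H1): for every `M > 0`,
`sup { f(μ+θ(z-μ))/f(z) : z ∈ B(0,M), f(z) > 0 } < ∞`. -/
def H1 {d : ℕ} (f : EuclideanSpace ℝ (Fin d) → ℝ) (θ : ℝ)
    (μ : EuclideanSpace ℝ (Fin d)) : Prop :=
  ∀ M > (0 : ℝ), ∃ C : ℝ, ∀ z ∈ Metric.ball (0 : EuclideanSpace ℝ (Fin d)) M,
    0 < f z → f (μ + θ • (z - μ)) / f z ≤ C

/-- Hypothesis (H2). -/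
def H2 {d : ℕ} (P : Measure (EuclideanSpace ℝ (Fin d))) (θ : ℝ)
    (μ : EuclideanSpace ℝ (Fin d)) (s r : ℝ) : Prop :=
  ∃ b ∈ Ioo (0 : ℝ) (1 / 2), ∃ M > (0 : ℝ),
    (∫⁻ x in {x : EuclideanSpace ℝ (Fin d) | M < ‖x‖},
      (⨆ t ∈ Ioc (0 : ℝ) (2 * b * ‖x‖),
        volume (Metric.ball x t) / P (Metric.ball x t)) ^ (s / ((d : ℝ) + r))
      ∂(Pdil P θ μ)) < ⊤

/-- Hypothesis (H3): `λ_d(· ∩ supp P) ≪ P` and `supp P` is a finite union of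
closed convex sets. -/
def H3 {d : ℕ} (P : Measure (EuclideanSpace ℝ (Fin d))) : Prop :=
  volume.restrict (msupp P) ≪ P ∧
  ∃ (k : ℕ) (C : Fin k → Set (EuclideanSpace ℝ (Fin d))),
    (∀ i, IsClosed (C i) ∧ Convex ℝ (C i)) ∧ msupp P = ⋃ i, C i

lemma meas_ballmeas {d : ℕ} (Q : Measure (EuclideanSpace ℝ (Fin d))) [SFinite Q]
    {ρ : EuclideanSpace ℝ (Fin d) → ℝ} (hρ : Continuous ρ) :
    Measurable fun x => Q (Metric.ball x (ρ x)) := by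
  have hs : MeasurableSet {p : (EuclideanSpace ℝ (Fin d)) × (EuclideanSpace ℝ (Fin d)) |
      dist p.2 p.1 < ρ p.1} :=
    (isOpen_lt (continuous_dist.comp (continuous_snd.prodMk continuous_fst))
      (hρ.comp continuous_fst)).measurableSet
  have h := measurable_measure_prodMk_left (ν := Q) hs
  exact h

lemma cont_qdist {d : ℕ} (α : Finset (EuclideanSpace ℝ (Fin d))) (b : ℝ) :
    Continuous fun x => b * qdist x α :=
  continuous_const.mul (Metric.continuous_infDist_pt _)

lemma meas_maxFun {d : ℕ} (P : Measure (EuclideanSpace ℝ (Fin d))) [SFinite P]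
    (α : ℕ → Finset (EuclideanSpace ℝ (Fin d))) (b : ℝ) :
    Measurable (maxFun P α b) := by
  apply Measurable.iSup
  intro n
  by_cases h : 1 ≤ n
  · simp only [h, iSup_pos]
    exact (meas_ballmeas volume (cont_qdist (α n) b)).div
      (meas_ballmeas P (cont_qdist (α n) b))
  · simp only [h, iSup_false]
    exact measurable_const

lemma vol_ball_eq {d : ℕ} (hd : 1 ≤ d) (x : EuclideanSpace ℝ (Fin d)) {t : ℝ} (ht : 0 ≤ t) :
    volume (Metric.ball x t)
      = ENNReal.ofReal (t ^ d) * volume (Metric.ball (0 : EuclideanSpace ℝ (Fin d)) 1) := by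
  haveI : Nonempty (Fin d) := ⟨⟨0, hd⟩⟩
  rw [Measure.addHaar_ball volume x ht, finrank_euclideanSpace_fin]

lemma weak_bound {d : ℕ} (hd : 1 ≤ d) (P : Measure (EuclideanSpace ℝ (Fin d)))
    [IsProbabilityMeasure P]
    (α : ℕ → Finset (EuclideanSpace ℝ (Fin d))) (b M R : ℝ) (hb : 0 < b)
    (hR : 0 ≤ R) (hM : 0 < M)
    (hq : ∀ n, 1 ≤ n → ∀ x : EuclideanSpace ℝ (Fin d), qdist x (α n) ≤ ‖x‖ + R) :
    ∃ C : ℝ≥0∞, C ≠ ⊤ ∧ ∀ u : ℝ≥0∞, u ≠ 0 → u ≠ ⊤ →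
      P {x | ‖x‖ ≤ M ∧ u < maxFun P α b x} ≤ C / u := by
  classical
  obtain ⟨N, τ, hτ, hN⟩ :=
    HasBesicovitchCovering.no_satelliteConfig (α := EuclideanSpace ℝ (Fin d))
  set V₁ := volume (Metric.ball (0 : EuclideanSpace ℝ (Fin d)) 1) with hV₁
  have hV₁top : V₁ ≠ ⊤ := measure_ball_lt_top.ne
  set Λ := volume (Metric.closedBall (0 : EuclideanSpace ℝ (Fin d)) (M + 1)) with hΛ
  have hΛtop : Λ ≠ ⊤ := measure_closedBall_lt_top.ne
  set T := max (b * (M + R)) 1 with hT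
  have hT1 : (1 : ℝ) ≤ T := le_max_right _ _
  -- finite 1/2-net of the closed ball
  obtain ⟨F, hF⟩ : ∃ F : Finset (EuclideanSpace ℝ (Fin d)), Metric.closedBall (0 : EuclideanSpace ℝ (Fin d)) M ⊆ ⋃ y ∈ F, Metric.ball y (1/2) := by
    have hK : IsCompact (Metric.closedBall (0 : EuclideanSpace ℝ (Fin d)) M) := isCompact_closedBall _ _
    exact hK.elim_finite_subcover (fun y : EuclideanSpace ℝ (Fin d) => Metric.ball y (1/2))
      (fun y => isOpen_ball) (fun x hx => mem_iUnion.2 ⟨x, mem_ball_self (by norm_num)⟩)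
  refine ⟨(N + 1) * (ENNReal.ofReal (2 ^ d) * Λ) + F.card * (ENNReal.ofReal (T ^ d) * V₁),
    ?_, ?_⟩
  · refine ENNReal.add_ne_top.2 ⟨ENNReal.mul_ne_top (by simp) (ENNReal.mul_ne_top ofReal_ne_top hΛtop),
      ENNReal.mul_ne_top (by simp) (ENNReal.mul_ne_top ofReal_ne_top hV₁top)⟩
  intro u hu0 huT
  set q : ℕ → EuclideanSpace ℝ (Fin d) → ℝ := fun n x => b * qdist x (α n) with hqdef
  set B : ℕ → EuclideanSpace ℝ (Fin d) → Set (EuclideanSpace ℝ (Fin d)) := fun n x => Metric.ball x (q n x) with hBdef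
  set pred1 : EuclideanSpace ℝ (Fin d) → Prop := fun x => ∃ n, 1 ≤ n ∧ 0 < q n x ∧ q n x ≤ 1 ∧
    P (B n x) * u ≤ volume (B n x) with hpred1
  set pred2 : EuclideanSpace ℝ (Fin d) → Prop := fun x => ∃ n, 1 ≤ n ∧ 1 < q n x ∧
    P (B n x) * u ≤ volume (B n x) with hpred2
  set A₁ : Set (EuclideanSpace ℝ (Fin d)) := {x | ‖x‖ ≤ M ∧ pred1 x} with hA₁
  set A₂ : Set (EuclideanSpace ℝ (Fin d)) := {x | ‖x‖ ≤ M ∧ pred2 x} with hA₂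
  -- the superlevel set is contained in A₁ ∪ A₂
  have hsub : {x | ‖x‖ ≤ M ∧ u < maxFun P α b x} ⊆ A₁ ∪ A₂ := by
    rintro x ⟨hxM, hxu⟩
    rw [maxFun, lt_iSup_iff] at hxu
    obtain ⟨n, hxu⟩ := hxu
    rw [lt_iSup_iff] at hxu
    obtain ⟨hn, hxu⟩ := hxu
    have hq0 : 0 < q n x := by
      by_contra h
      push_neg at h
      have : Metric.ball x (q n x) = ∅ := Metric.ball_eq_empty.2 h
      rw [hqdef] at this
      simp only [this] at hxu
      simp at hxu
    have hPu : P (B n x) * u ≤ volume (B n x) := by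
      rcases eq_or_ne (P (B n x)) 0 with h0 | h0
      · simp [h0]
      · have hPt : P (B n x) ≠ ⊤ := (measure_lt_top P _).ne
        have := (ENNReal.lt_div_iff_mul_lt (Or.inl h0) (Or.inl hPt)).1 hxu
        exact (mul_comm u _ ▸ this.le)
    rcases le_or_gt (q n x) 1 with h1 | h1
    · exact Or.inl ⟨hxM, n, hn, hq0, h1, hPu⟩
    · exact Or.inr ⟨hxM, n, hn, h1, hPu⟩
  have PS : P {x | ‖x‖ ≤ M ∧ u < maxFun P α b x} ≤ P A₁ + P A₂ :=
    (measure_mono hsub).trans (measure_union_le _ _)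
  -- Besicovitch bound on A₁
  have hPA₁ : P A₁ ≤ ((N + 1) * (ENNReal.ofReal (2 ^ d) * Λ)) / u := by
    set rad : EuclideanSpace ℝ (Fin d) → ℝ := fun x =>
      if h : pred1 x then q h.choose x / 2 else 1 with hrad
    have hrad_pos : ∀ x ∈ A₁, 0 < rad x := by
      rintro x ⟨-, hx⟩
      rw [hrad]; simp only [dif_pos hx]
      exact half_pos hx.choose_spec.2.1
    have hrad_le : ∀ x ∈ A₁, rad x ≤ 1 := by
      rintro x ⟨-, hx⟩
      rw [hrad]; simp only [dif_pos hx]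
      linarith [hx.choose_spec.2.2.1]
    obtain ⟨t, hts, htm, htd⟩ :=
      Besicovitch.exist_finset_disjoint_balls_large_measure P hτ hN A₁ rad hrad_pos hrad_le
    have hball : ∀ x ∈ t, P (Metric.closedBall x (rad x)) * u ≤
        ENNReal.ofReal (2 ^ d) * volume (Metric.closedBall x (rad x)) ∧
        Metric.closedBall x (rad x) ⊆ Metric.closedBall (0 : EuclideanSpace ℝ (Fin d)) (M + 1) := by
      intro x hxt
      have hxA : x ∈ A₁ := hts hxt
      obtain ⟨hxM, hx⟩ := hxA
      obtain ⟨hn1, hq0, hq1, hPu⟩ := hx.choose_spec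
      have hradx : rad x = q hx.choose x / 2 := by rw [hrad]; simp only [dif_pos hx]
      constructor
      · calc P (Metric.closedBall x (rad x)) * u ≤ P (B hx.choose x) * u := by
              gcongr
              rw [hradx]
              exact (Metric.closedBall_subset_ball (by linarith)).trans le_rfl
          _ ≤ volume (B hx.choose x) := hPu
          _ = ENNReal.ofReal ((q hx.choose x) ^ d) * V₁ := vol_ball_eq hd x hq0.le
          _ = ENNReal.ofReal (2 ^ d) * (ENNReal.ofReal ((rad x) ^ d) * V₁) := by
              have h2 : (2:ℝ) * (q hx.choose x / 2) = q hx.choose x := by ring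
              rw [hradx, ← mul_assoc, ← ENNReal.ofReal_mul (by positivity), ← mul_pow, h2]
          _ = ENNReal.ofReal (2 ^ d) * volume (Metric.ball x (rad x)) := by
              rw [vol_ball_eq hd x (by rw [hradx]; linarith)]
          _ ≤ ENNReal.ofReal (2 ^ d) * volume (Metric.closedBall x (rad x)) := by
              gcongr
              exact Metric.ball_subset_closedBall
      · apply Metric.closedBall_subset_closedBall'
        rw [dist_zero_right] at *
        rw [hradx]
        linarith
    have hU : P A₁ ≤ (N : ℝ≥0∞) / (N + 1) * P A₁ + ∑ x ∈ t, P (Metric.closedBall x (rad x)) := by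
      calc P A₁ ≤ P (A₁ \ ⋃ x ∈ t, Metric.closedBall x (rad x)) +
            P (⋃ x ∈ t, Metric.closedBall x (rad x)) :=
            (measure_mono (subset_diff_union _ _)).trans (measure_union_le _ _)
        _ ≤ _ := add_le_add htm (measure_biUnion_finset_le _ _)
    have hsum : (∑ x ∈ t, P (Metric.closedBall x (rad x))) * u ≤ ENNReal.ofReal (2 ^ d) * Λ := by
      calc (∑ x ∈ t, P (Metric.closedBall x (rad x))) * u
          = ∑ x ∈ t, P (Metric.closedBall x (rad x)) * u := Finset.sum_mul _ _ _
        _ ≤ ∑ x ∈ t, ENNReal.ofReal (2 ^ d) * volume (Metric.closedBall x (rad x)) :=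
            Finset.sum_le_sum fun x hx => (hball x hx).1
        _ = ENNReal.ofReal (2 ^ d) * ∑ x ∈ t, volume (Metric.closedBall x (rad x)) :=
            (Finset.mul_sum _ _ _).symm
        _ = ENNReal.ofReal (2 ^ d) * volume (⋃ x ∈ t, Metric.closedBall x (rad x)) := by
            rw [measure_biUnion_finset htd fun x _ => measurableSet_closedBall]
        _ ≤ ENNReal.ofReal (2 ^ d) * Λ := by
            gcongr
            exact measure_mono (iUnion₂_subset fun x hx => (hball x hx).2)
    have hsum' : ∑ x ∈ t, P (Metric.closedBall x (rad x)) ≤ ENNReal.ofReal (2 ^ d) * Λ / u :=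
      (ENNReal.le_div_iff_mul_le (Or.inl hu0) (Or.inl huT)).2 hsum
    have hfin : (N : ℝ≥0∞) * P A₁ ≠ ⊤ :=
      ENNReal.mul_ne_top (by simp) (measure_lt_top P _).ne
    have step : (N : ℝ≥0∞) * P A₁ + P A₁ ≤
        (N : ℝ≥0∞) * P A₁ + ((N : ℝ≥0∞) + 1) * (ENNReal.ofReal (2 ^ d) * Λ / u) := by
      have h2 : ((N : ℝ≥0∞) + 1) * P A₁ ≤
          ((N : ℝ≥0∞) + 1) * ((N : ℝ≥0∞) / (N + 1) * P A₁) +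
          ((N : ℝ≥0∞) + 1) * (ENNReal.ofReal (2 ^ d) * Λ / u) := by
        rw [← mul_add]
        gcongr
        exact hU.trans (add_le_add le_rfl hsum')
      have h3 : ((N : ℝ≥0∞) + 1) * ((N : ℝ≥0∞) / (N + 1) * P A₁) = (N : ℝ≥0∞) * P A₁ := by
        rw [← mul_assoc, ENNReal.mul_div_cancel' (by simp) (by simp)]
      calc (N : ℝ≥0∞) * P A₁ + P A₁ = ((N : ℝ≥0∞) + 1) * P A₁ := by ring
        _ ≤ ((N : ℝ≥0∞) + 1) * ((N : ℝ≥0∞) / (N + 1) * P A₁) +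
            ((N : ℝ≥0∞) + 1) * (ENNReal.ofReal (2 ^ d) * Λ / u) := h2
        _ = _ := by rw [h3]
    have hfinal : P A₁ ≤ ((N : ℝ≥0∞) + 1) * (ENNReal.ofReal (2 ^ d) * Λ / u) :=
      (ENNReal.add_le_add_iff_left hfin).1 step
    rwa [← mul_div_assoc] at hfinal
  -- net bound on A₂
  have hPA₂ : P A₂ ≤ (F.card * (ENNReal.ofReal (T ^ d) * V₁)) / u := by
    have hcov : A₂ ⊆ ⋃ y ∈ F, (Metric.ball y (1/2) ∩ A₂) := by
      intro x hx
      have hxc : x ∈ Metric.closedBall (0 : EuclideanSpace ℝ (Fin d)) M :=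
        mem_closedBall_zero_iff.2 (by
          calc ‖x‖ ≤ M := hx.1)
      obtain ⟨y, hyF, hyx⟩ := Set.mem_iUnion₂.1 (hF hxc)
      exact Set.mem_biUnion hyF ⟨hyx, hx⟩
    have hy : ∀ y ∈ F, P (Metric.ball y (1/2) ∩ A₂) ≤ ENNReal.ofReal (T ^ d) * V₁ / u := by
      intro y _
      by_cases hne : (Metric.ball y (1/2) ∩ A₂).Nonempty
      · obtain ⟨x₀, hx₀b, hx₀M, hx₀⟩ := hne
        obtain ⟨n, hn1, hq1, hPu⟩ := hx₀
        have hdist : dist y x₀ < 1/2 := by rw [dist_comm]; exact Metric.mem_ball.1 hx₀b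
        have hsub2 : Metric.ball y (1/2) ⊆ B n x₀ :=
          Metric.ball_subset_ball' (by linarith : 1/2 + dist y x₀ ≤ q n x₀)
        have hqT : q n x₀ ≤ T := by
          have h1 := hq n hn1 x₀
          have h2 : q n x₀ ≤ b * (M + R) := by
            have h3 := mul_le_mul_of_nonneg_left h1 hb.le
            have h4 : b * (‖x₀‖ + R) ≤ b * (M + R) := by nlinarith
            calc q n x₀ = b * qdist x₀ (α n) := rfl
              _ ≤ b * (M + R) := by linarith
          exact h2.trans (le_max_left _ _)
        refine (ENNReal.le_div_iff_mul_le (Or.inl hu0) (Or.inl huT)).2 ?_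
        calc P (Metric.ball y (1/2) ∩ A₂) * u ≤ P (B n x₀) * u := by
              gcongr
              exact Set.inter_subset_left.trans hsub2
          _ ≤ volume (B n x₀) := hPu
          _ = ENNReal.ofReal ((q n x₀) ^ d) * V₁ := vol_ball_eq hd x₀ (by linarith)
          _ ≤ ENNReal.ofReal (T ^ d) * V₁ :=
              mul_le_mul_left (ENNReal.ofReal_le_ofReal
                (pow_le_pow_left₀ (by linarith) hqT d)) V₁
      · rw [Set.not_nonempty_iff_eq_empty] at hne
        rw [hne]
        simp
    calc P A₂ ≤ ∑ y ∈ F, P (Metric.ball y (1/2) ∩ A₂) :=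
          (measure_mono hcov).trans (measure_biUnion_finset_le _ _)
      _ ≤ ∑ _y ∈ F, ENNReal.ofReal (T ^ d) * V₁ / u := Finset.sum_le_sum hy
      _ = (F.card * (ENNReal.ofReal (T ^ d) * V₁)) / u := by
          rw [Finset.sum_const, nsmul_eq_mul]
          conv_rhs => rw [mul_div_assoc]
  refine PS.trans ?_
  rw [← ENNReal.div_add_div_same]
  exact add_le_add hPA₁ hPA₂

lemma quantizer_loc {d : ℕ} (P : Measure (EuclideanSpace ℝ (Fin d))) [IsProbabilityMeasure P]
    (r : ℝ) (hr : 0 < r) (η : ℝ) (hη : 0 < η)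
    (hmom : (∫⁻ x, ENNReal.ofReal ‖x‖ ^ (r + η) ∂P) ≠ ⊤)
    (α : ℕ → Finset (EuclideanSpace ℝ (Fin d))) (hα : OptimalSeq P r α) :
    ∃ R : ℝ, 0 ≤ R ∧ ∀ n, 1 ≤ n → ∀ x, qdist x (α n) ≤ ‖x‖ + R := by
  classical
  have hE0 : qerr P r ({0} : Finset (EuclideanSpace ℝ (Fin d))) ≠ ⊤ := by
    have hle : ∀ x : EuclideanSpace ℝ (Fin d),
        ENNReal.ofReal (qdist x ({0} : Finset (EuclideanSpace ℝ (Fin d)))) ^ r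
          ≤ 1 + ENNReal.ofReal ‖x‖ ^ (r + η) := by
      intro x
      have hq : qdist x ({0} : Finset (EuclideanSpace ℝ (Fin d))) = ‖x‖ := by
        simp [qdist, Metric.infDist_singleton]
      rw [hq]
      rcases le_or_gt (ENNReal.ofReal ‖x‖) 1 with h | h
      · exact (ENNReal.rpow_le_one h hr.le).trans le_self_add
      · exact (ENNReal.rpow_le_rpow_of_exponent_le h.le (by linarith)).trans le_add_self
    have hb : qerr P r ({0} : Finset (EuclideanSpace ℝ (Fin d)))
        ≤ 1 + ∫⁻ x, ENNReal.ofReal ‖x‖ ^ (r + η) ∂P := by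
      calc qerr P r ({0} : Finset (EuclideanSpace ℝ (Fin d)))
          ≤ ∫⁻ x, (1 + ENNReal.ofReal ‖x‖ ^ (r + η)) ∂P := lintegral_mono hle
        _ = ∫⁻ _x, (1 : ℝ≥0∞) ∂P + ∫⁻ x, ENNReal.ofReal ‖x‖ ^ (r + η) ∂P :=
            lintegral_add_left measurable_const _
        _ = 1 + ∫⁻ x, ENNReal.ofReal ‖x‖ ^ (r + η) ∂P := by simp
    exact ne_top_of_le_ne_top (ENNReal.add_ne_top.2 ⟨one_ne_top, hmom⟩) hb
  have hqle : ∀ n, 1 ≤ n → qerr P r (α n) ≤ qerr P r ({0} : Finset (EuclideanSpace ℝ (Fin d))) := by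
    intro n hn
    obtain ⟨hne, hcard, heq⟩ := hα n hn
    rw [heq]
    have h1 : enr P r n ≤ qerr P r ({0} : Finset (EuclideanSpace ℝ (Fin d))) ^ (1 / r) := by
      refine iInf_le_of_le {0} (iInf_le_of_le (Finset.singleton_nonempty _)
        (iInf_le_of_le (by simpa using hn) le_rfl))
    calc enr P r n ^ r ≤ (qerr P r ({0} : Finset (EuclideanSpace ℝ (Fin d))) ^ (1 / r)) ^ r :=
        ENNReal.rpow_le_rpow h1 hr.le
      _ = qerr P r ({0} : Finset (EuclideanSpace ℝ (Fin d))) := by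
        rw [← ENNReal.rpow_mul, one_div, inv_mul_cancel₀ hr.ne', ENNReal.rpow_one]
  obtain ⟨k, hk⟩ : ∃ k : ℕ, 0 < P (Metric.ball (0 : EuclideanSpace ℝ (Fin d)) (k + 1)) := by
    by_contra h
    push_neg at h
    have h0 : ∀ k : ℕ, P (Metric.ball (0 : EuclideanSpace ℝ (Fin d)) (k + 1)) = 0 :=
      fun k => le_zero_iff.1 (h k)
    have hU : (univ : Set (EuclideanSpace ℝ (Fin d)))
        = ⋃ k : ℕ, Metric.ball (0 : EuclideanSpace ℝ (Fin d)) (k + 1) := by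
      ext x
      simp only [mem_iUnion, mem_univ, true_iff]
      obtain ⟨k, hk⟩ := exists_nat_gt ‖x‖
      exact ⟨k, by rw [mem_ball, dist_zero_right]; linarith⟩
    have : (1 : ℝ≥0∞) = 0 := by
      rw [← measure_univ (μ := P), hU]
      exact le_antisymm ((measure_iUnion_le _).trans (by simp [h0])) zero_le
    simp at this
  set ρ : ℝ := (k : ℝ) + 1 with hρ
  have hρ0 : 0 < ρ := by positivity
  set m := P (Metric.ball (0 : EuclideanSpace ℝ (Fin d)) ρ) with hm
  have hKey : ∀ n, 1 ≤ n → ENNReal.ofReal (qdist 0 (α n) - ρ) ^ r * m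
      ≤ qerr P r ({0} : Finset (EuclideanSpace ℝ (Fin d))) := by
    intro n hn
    have hpt : ∀ x ∈ Metric.ball (0 : EuclideanSpace ℝ (Fin d)) ρ,
        ENNReal.ofReal (qdist 0 (α n) - ρ) ^ r ≤ ENNReal.ofReal (qdist x (α n)) ^ r := by
      intro x hx
      refine ENNReal.rpow_le_rpow (ENNReal.ofReal_le_ofReal ?_) hr.le
      have h1 : qdist 0 (α n) ≤ qdist x (α n) + dist 0 x := Metric.infDist_le_infDist_add_dist
      have h2 : dist 0 x < ρ := by rw [dist_comm]; exact mem_ball.1 hx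
      linarith
    calc ENNReal.ofReal (qdist 0 (α n) - ρ) ^ r * m
        = ∫⁻ _x in Metric.ball (0 : EuclideanSpace ℝ (Fin d)) ρ,
            ENNReal.ofReal (qdist 0 (α n) - ρ) ^ r ∂P := by rw [setLIntegral_const]
      _ ≤ ∫⁻ x in Metric.ball (0 : EuclideanSpace ℝ (Fin d)) ρ,
            ENNReal.ofReal (qdist x (α n)) ^ r ∂P := setLIntegral_mono' measurableSet_ball hpt
      _ ≤ qerr P r (α n) := setLIntegral_le_lintegral _ _
      _ ≤ _ := hqle n hn
  set K := qerr P r ({0} : Finset (EuclideanSpace ℝ (Fin d))) / m with hK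
  have hKtop : K ≠ ⊤ := by
    rw [hK]
    exact (ENNReal.div_lt_top hE0 hk.ne').ne
  set K' := K ^ (1 / r) with hK'
  have hK't : K' ≠ ⊤ := (ENNReal.rpow_lt_top_of_nonneg (by positivity) hKtop).ne
  refine ⟨ρ + K'.toReal, by positivity, ?_⟩
  intro n hn x
  have hD : qdist 0 (α n) ≤ ρ + K'.toReal := by
    rcases le_or_gt (qdist 0 (α n)) ρ with h | h
    · have := ENNReal.toReal_nonneg (a := K')
      linarith
    · have h1 : ENNReal.ofReal (qdist 0 (α n) - ρ) ^ r ≤ K :=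
        (ENNReal.le_div_iff_mul_le (Or.inl hk.ne') (Or.inl (measure_ne_top P _))).2 (hKey n hn)
      have h2 : ENNReal.ofReal (qdist 0 (α n) - ρ) ≤ K' := by
        calc ENNReal.ofReal (qdist 0 (α n) - ρ)
            = (ENNReal.ofReal (qdist 0 (α n) - ρ) ^ r) ^ (1 / r) := by
              rw [← ENNReal.rpow_mul, mul_one_div, div_self hr.ne', ENNReal.rpow_one]
          _ ≤ K ^ (1 / r) := ENNReal.rpow_le_rpow h1 (by positivity)
      have h3 : qdist 0 (α n) - ρ ≤ K'.toReal :=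
        (ENNReal.ofReal_le_iff_le_toReal hK't).1 h2
      linarith
  calc qdist x (α n) ≤ qdist 0 (α n) + dist x 0 := Metric.infDist_le_infDist_add_dist
    _ ≤ ‖x‖ + (ρ + K'.toReal) := by rw [dist_zero_right]; linarith

lemma Pdil_compare {d : ℕ} (hd : 1 ≤ d) (f : EuclideanSpace ℝ (Fin d) → ℝ) (hf0 : ∀ x, 0 ≤ f x)
    (hfm : Measurable f) (P : Measure (EuclideanSpace ℝ (Fin d)))
    (hP : P = volume.withDensity fun x => ENNReal.ofReal (f x))
    (θ : ℝ) (hθ : 0 < θ) (μ : EuclideanSpace ℝ (Fin d))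
    (hadm : Admissible f θ μ) (h1 : H1 f θ μ) (M₂ : ℝ) (hM₂ : 0 < M₂) :
    ∃ C : ℝ≥0∞, C ≠ ⊤ ∧ ∀ A : Set (EuclideanSpace ℝ (Fin d)), MeasurableSet A →
      A ⊆ Metric.ball 0 M₂ → Pdil P θ μ A ≤ C * P A := by
  classical
  set S : EuclideanSpace ℝ (Fin d) → EuclideanSpace ℝ (Fin d) := fun y => μ + θ • (y - μ)
    with hSdef
  set T : EuclideanSpace ℝ (Fin d) → EuclideanSpace ℝ (Fin d) := fun x => μ + θ⁻¹ • (x - μ)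
    with hTdef
  have hSc : Continuous S := by
    apply continuous_const.add
    exact (continuous_id.sub continuous_const).const_smul θ
  have hTc : Continuous T := by
    apply continuous_const.add
    exact (continuous_id.sub continuous_const).const_smul θ⁻¹
  have hSm : Measurable S := hSc.measurable
  have hTm : Measurable T := hTc.measurable
  have hST : ∀ x, S (T x) = x := by
    intro x
    simp only [hSdef, hTdef]
    rw [add_sub_cancel_left, smul_smul, mul_inv_cancel₀ hθ.ne', one_smul, add_sub_cancel]
  have hTS : ∀ y, T (S y) = y := by
    intro y
    simp only [hSdef, hTdef]
    rw [add_sub_cancel_left, smul_smul, inv_mul_cancel₀ hθ.ne', one_smul, add_sub_cancel]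
  have hShom : ∀ y, AffineMap.homothety μ θ y = S y := by
    intro y
    simp only [hSdef, AffineMap.homothety_apply]
    simp [vsub_eq_sub, vadd_eq_add]
    abel
  have hThom : ∀ y, AffineMap.homothety μ θ⁻¹ y = T y := by
    intro y
    simp only [hTdef, AffineMap.homothety_apply]
    simp [vsub_eq_sub, vadd_eq_add]
    abel
  -- pushforwards of Lebesgue measure
  have hmapT : Measure.map T (volume : Measure (EuclideanSpace ℝ (Fin d)))
      = (ENNReal.ofReal (θ ^ d)) • (volume : Measure (EuclideanSpace ℝ (Fin d))) := by
    ext B hB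
    rw [Measure.map_apply hTm hB, Measure.smul_apply, smul_eq_mul]
    have himg : T ⁻¹' B = AffineMap.homothety μ θ '' B := by
      ext x
      constructor
      · intro hx
        exact ⟨T x, hx, by rw [hShom]; exact hST x⟩
      · rintro ⟨y, hy, rfl⟩
        show T (AffineMap.homothety μ θ y) ∈ B
        rw [hShom, hTS]
        exact hy
    rw [himg, Measure.addHaar_image_homothety, finrank_euclideanSpace_fin,
      abs_of_nonneg (by positivity)]
  have hmapS : Measure.map S (volume : Measure (EuclideanSpace ℝ (Fin d)))
      = (ENNReal.ofReal ((θ⁻¹) ^ d)) • (volume : Measure (EuclideanSpace ℝ (Fin d))) := by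
    ext B hB
    rw [Measure.map_apply hSm hB, Measure.smul_apply, smul_eq_mul]
    have himg : S ⁻¹' B = AffineMap.homothety μ θ⁻¹ '' B := by
      ext x
      constructor
      · intro hx
        exact ⟨S x, hx, by rw [hThom]; exact hTS x⟩
      · rintro ⟨y, hy, rfl⟩
        show S (AffineMap.homothety μ θ⁻¹ y) ∈ B
        rw [hThom, hST]
        exact hy
    rw [himg, Measure.addHaar_image_homothety, finrank_euclideanSpace_fin,
      abs_of_nonneg (by positivity)]
  -- the density formula for Pdil
  have hg'm : Measurable fun y => ENNReal.ofReal (f (S y)) :=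
    ENNReal.measurable_ofReal.comp (hfm.comp hSm)
  have hνA : ∀ A : Set (EuclideanSpace ℝ (Fin d)), MeasurableSet A → Pdil P θ μ A
      = ENNReal.ofReal (θ ^ d) * ∫⁻ y in A, ENNReal.ofReal (f (S y)) ∂volume := by
    intro A hA
    have h1' : Pdil P θ μ A = P (T ⁻¹' A) := Measure.map_apply hTm hA
    rw [h1', hP, withDensity_apply _ (hTm hA)]
    have hind : ∀ x, (T ⁻¹' A).indicator (fun x => ENNReal.ofReal (f x)) x
        = (A.indicator fun y => ENNReal.ofReal (f (S y))) (T x) := by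
      intro x
      by_cases hx : T x ∈ A
      · rw [indicator_of_mem hx, indicator_of_mem (by exact hx : x ∈ T ⁻¹' A), hST]
      · rw [indicator_of_notMem hx, indicator_of_notMem (by exact hx : x ∉ T ⁻¹' A)]
    calc ∫⁻ x in T ⁻¹' A, ENNReal.ofReal (f x) ∂volume
        = ∫⁻ x, (T ⁻¹' A).indicator (fun x => ENNReal.ofReal (f x)) x ∂volume := by
          rw [lintegral_indicator (hTm hA)]
      _ = ∫⁻ x, (A.indicator fun y => ENNReal.ofReal (f (S y))) (T x) ∂volume := by
          simp_rw [hind]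
      _ = ∫⁻ y, (A.indicator fun y => ENNReal.ofReal (f (S y))) y ∂(Measure.map T volume) :=
          (lintegral_map (hg'm.indicator hA) hTm).symm
      _ = ENNReal.ofReal (θ ^ d) * ∫⁻ y in A, ENNReal.ofReal (f (S y)) ∂volume := by
          rw [hmapT, lintegral_smul_measure, lintegral_indicator hA, smul_eq_mul]
  -- a.e. comparison of densities on the ball
  obtain ⟨C, hC⟩ := h1 M₂ hM₂
  set C' := max C 0 with hC'
  have hnull : ∀ᵐ y ∂(volume : Measure (EuclideanSpace ℝ (Fin d))), (0 < f (S y) → 0 < f y) := by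
    have hNset : MeasurableSet {x : EuclideanSpace ℝ (Fin d) | 0 < f x ∧ ¬ 0 < f (T x)} :=
      ((measurableSet_lt measurable_const hfm).inter
        (measurableSet_lt measurable_const (hfm.comp hTm)).compl)
    have hN0 : volume {x : EuclideanSpace ℝ (Fin d) | 0 < f x ∧ ¬ 0 < f (T x)} = 0 := by
      have h6 : ∀ᵐ x ∂(volume : Measure (EuclideanSpace ℝ (Fin d))), 0 < f x → 0 < f (T x) := hadm
      rw [ae_iff] at h6
      have h7 : {x : EuclideanSpace ℝ (Fin d) | 0 < f x ∧ ¬ 0 < f (T x)}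
          = {x : EuclideanSpace ℝ (Fin d) | ¬(0 < f x → 0 < f (T x))} := by
        ext x
        simp [Classical.not_imp]
      rw [h7]
      exact h6
    rw [ae_iff]
    have hsub : {y : EuclideanSpace ℝ (Fin d) | ¬(0 < f (S y) → 0 < f y)}
        ⊆ S ⁻¹' {x : EuclideanSpace ℝ (Fin d) | 0 < f x ∧ ¬ 0 < f (T x)} := by
      intro y hy
      simp only [mem_setOf_eq, Classical.not_imp] at hy
      simp only [mem_preimage, mem_setOf_eq, hTS]
      exact hy
    refine measure_mono_null hsub ?_
    have : volume (S ⁻¹' {x : EuclideanSpace ℝ (Fin d) | 0 < f x ∧ ¬ 0 < f (T x)})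
        = Measure.map S volume {x : EuclideanSpace ℝ (Fin d) | 0 < f x ∧ ¬ 0 < f (T x)} :=
      (Measure.map_apply hSm hNset).symm
    rw [this, hmapS, Measure.smul_apply, smul_eq_mul, hN0, mul_zero]
  have hae : ∀ᵐ y ∂(volume : Measure (EuclideanSpace ℝ (Fin d))),
      y ∈ Metric.ball (0 : EuclideanSpace ℝ (Fin d)) M₂ →
      ENNReal.ofReal (f (S y)) ≤ ENNReal.ofReal C' * ENNReal.ofReal (f y) := by
    filter_upwards [hnull] with y hy hball
    rcases lt_or_ge 0 (f y) with hf | hf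
    · have h2 := hC y hball hf
      have h3 : f (S y) ≤ C * f y := (div_le_iff₀ hf).1 h2
      have h4 : f (S y) ≤ C' * f y := by
        have : C * f y ≤ C' * f y := mul_le_mul_of_nonneg_right (le_max_left _ _) hf.le
        linarith
      calc ENNReal.ofReal (f (S y)) ≤ ENNReal.ofReal (C' * f y) := ENNReal.ofReal_le_ofReal h4
        _ = ENNReal.ofReal C' * ENNReal.ofReal (f y) := ENNReal.ofReal_mul (le_max_right _ _)
    · have hfy : f y = 0 := le_antisymm hf (hf0 y)
      have hfSy : f (S y) = 0 := by
        by_contra h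
        have h5 : 0 < f (S y) := lt_of_le_of_ne (hf0 _) (Ne.symm h)
        have := hy h5
        rw [hfy] at this
        exact lt_irrefl 0 this
      simp [hfSy]
  refine ⟨ENNReal.ofReal (θ ^ d) * ENNReal.ofReal C',
    ENNReal.mul_ne_top ofReal_ne_top ofReal_ne_top, ?_⟩
  intro A hA hAsub
  rw [hνA A hA, hP, withDensity_apply _ hA]
  have hmono : ∫⁻ y in A, ENNReal.ofReal (f (S y)) ∂volume
      ≤ ∫⁻ y in A, ENNReal.ofReal C' * ENNReal.ofReal (f y) ∂volume := by
    apply lintegral_mono_ae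
    rw [ae_restrict_iff' hA]
    filter_upwards [hae] with y hy hyA
    exact hy (hAsub hyA)
  calc ENNReal.ofReal (θ ^ d) * ∫⁻ y in A, ENNReal.ofReal (f (S y)) ∂volume
      ≤ ENNReal.ofReal (θ ^ d) * ∫⁻ y in A, ENNReal.ofReal C' * ENNReal.ofReal (f y) ∂volume :=
        mul_le_mul_right hmono _
    _ = ENNReal.ofReal (θ ^ d) * (ENNReal.ofReal C' * ∫⁻ y in A, ENNReal.ofReal (f y) ∂volume) := by
        rw [lintegral_const_mul _ hfm.ennreal_ofReal]
    _ = ENNReal.ofReal (θ ^ d) * ENNReal.ofReal C' * ∫⁻ y in A, ENNReal.ofReal (f y) ∂volume := by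
        rw [mul_assoc]


def Wset {d : ℕ} (P : Measure (EuclideanSpace ℝ (Fin d)))
    (α : ℕ → Finset (EuclideanSpace ℝ (Fin d))) (b : ℝ) : ℕ → Set (EuclideanSpace ℝ (Fin d))
  | 0 => {x | maxFun P α b x = ⊤}
  | 1 => {x | maxFun P α b x ≤ 1}
  | (k+2) => {x | (2:ℝ≥0∞)^k < maxFun P α b x ∧ maxFun P α b x ≤ 2^(k+1)}

def BndSeq (C : ℝ≥0∞) (p : ℝ) : ℕ → ℝ≥0∞
  | 0 => 0
  | 1 => 1
  | (k+2) => ((2:ℝ≥0∞)^(k+1)) ^ p * (C / 2^k)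

set_option maxHeartbeats 1000000 in
/-- **Corollary 3.1 (a).**
Let `r > 0`, `s ∈ (0, r+d)`, `P = f·λ_d` with `E|X|^{r+η} < ∞`, let `(α_n)` be an
`L^r(P)`-optimal sequence of quantizers, and let `(θ,μ)` be `P`-admissible
satisfying (H1) and (H2).  Then there exists `b ∈ (0,1/2)` with
`∫ ψ_b^{s/(d+r)} dP_{θ,μ} < ∞`. -/
theorem stmt_5 {d : ℕ} (hd : 1 ≤ d) (r s : ℝ) (hr : 0 < r) (hs : 0 < s)
    (hs' : s < r + d)
    (f : EuclideanSpace ℝ (Fin d) → ℝ) (hf0 : ∀ x, 0 ≤ f x) (hfm : Measurable f)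
    (P : Measure (EuclideanSpace ℝ (Fin d))) [IsProbabilityMeasure P]
    (hP : P = volume.withDensity fun x => ENNReal.ofReal (f x))
    (η : ℝ) (hη : 0 < η)
    (hmom : (∫⁻ x, ENNReal.ofReal ‖x‖ ^ (r + η) ∂P) ≠ ⊤)
    (α : ℕ → Finset (EuclideanSpace ℝ (Fin d))) (hα : OptimalSeq P r α)
    (θ : ℝ) (hθ : 0 < θ) (μ : EuclideanSpace ℝ (Fin d))
    (hadm : Admissible f θ μ) (h1 : H1 f θ μ) (h2 : H2 P θ μ s r) :
    ∃ b ∈ Ioo (0 : ℝ) (1 / 2),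
      (∫⁻ x, maxFun P α b x ^ (s / ((d : ℝ) + r)) ∂(Pdil P θ μ)) < ⊤ := by
  classical
  obtain ⟨b, hbIoo, M, hM, hH2⟩ := h2
  refine ⟨b, hbIoo, ?_⟩
  have hb0 : 0 < b := hbIoo.1
  obtain ⟨R, hR0, hqle⟩ := quantizer_loc P r hr η hη hmom α hα
  have hd0 : (0:ℝ) < (d:ℝ) := by exact_mod_cast hd
  set p := s / ((d:ℝ) + r) with hpdef
  have hp0 : 0 < p := div_pos hs (by linarith)
  have hp1 : p < 1 := (div_lt_one (by linarith)).2 (by linarith)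
  set M' := max M R with hM'def
  have hM'0 : 0 < M' := lt_of_lt_of_le hM (le_max_left _ _)
  have hψm : Measurable (maxFun P α b) := meas_maxFun P α b
  have hs1 : MeasurableSet {x : EuclideanSpace ℝ (Fin d) | M' < ‖x‖} :=
    (isOpen_lt continuous_const continuous_norm).measurableSet
  have hTm : Measurable fun x : EuclideanSpace ℝ (Fin d) => μ + θ⁻¹ • (x - μ) :=
    (continuous_const.add ((continuous_id.sub continuous_const).const_smul θ⁻¹)).measurable
  have hν1 : Pdil P θ μ univ = 1 := by
    rw [Pdil, Measure.map_apply hTm MeasurableSet.univ]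
    simp
  obtain ⟨C₂, hC₂top, hC₂⟩ := Pdil_compare hd f hf0 hfm P hP θ hθ μ hadm h1 (M'+1) (by linarith)
  obtain ⟨C₃, hC₃top, hC₃⟩ := weak_bound hd P α b M' R hb0 hR0 hM'0 hqle
  set C₄ := C₂ * C₃ with hC₄def
  have hC₄top : C₄ ≠ ⊤ := ENNReal.mul_ne_top hC₂top hC₃top
  -- weak bound transported to the dilated measure
  have hνweak : ∀ k : ℕ,
      Pdil P θ μ {x | ‖x‖ ≤ M' ∧ (2:ℝ≥0∞)^k < maxFun P α b x} ≤ C₄ / 2^k := by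
    intro k
    have hu0 : ((2:ℝ≥0∞)^k) ≠ 0 := pow_ne_zero _ (by norm_num)
    have huT : ((2:ℝ≥0∞)^k) ≠ ⊤ := (ENNReal.pow_lt_top (by norm_num)).ne
    have hmeasA : MeasurableSet
        {x : EuclideanSpace ℝ (Fin d) | ‖x‖ ≤ M' ∧ (2:ℝ≥0∞)^k < maxFun P α b x} := by
      rw [Set.setOf_and]
      exact (measurableSet_le measurable_norm measurable_const).inter
        (measurableSet_lt measurable_const hψm)
    have hsubball : {x : EuclideanSpace ℝ (Fin d) | ‖x‖ ≤ M' ∧ (2:ℝ≥0∞)^k < maxFun P α b x}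
        ⊆ Metric.ball 0 (M'+1) := by
      intro x hx
      rw [mem_ball, dist_zero_right]
      have := hx.1
      linarith
    calc Pdil P θ μ {x | ‖x‖ ≤ M' ∧ (2:ℝ≥0∞)^k < maxFun P α b x}
        ≤ C₂ * P {x | ‖x‖ ≤ M' ∧ (2:ℝ≥0∞)^k < maxFun P α b x} := hC₂ _ hmeasA hsubball
      _ ≤ C₂ * (C₃ / 2^k) := mul_le_mul_right (hC₃ _ hu0 huT) _
      _ = C₄ / 2^k := by rw [hC₄def, mul_div_assoc]
  -- tail estimate from (H2)
  have tail : ∫⁻ x in {x : EuclideanSpace ℝ (Fin d) | M' < ‖x‖},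
      maxFun P α b x ^ p ∂(Pdil P θ μ) < ⊤ := by
    have hsub2 : MeasurableSet {x : EuclideanSpace ℝ (Fin d) | M < ‖x‖} :=
      (isOpen_lt continuous_const continuous_norm).measurableSet
    refine lt_of_le_of_lt ?_ hH2
    rw [← lintegral_indicator hs1, ← lintegral_indicator hsub2]
    apply lintegral_mono
    intro x
    by_cases hx : M' < ‖x‖
    · have hx2 : M < ‖x‖ := lt_of_le_of_lt (le_max_left M R) hx
      have hx' : x ∈ {x : EuclideanSpace ℝ (Fin d) | M' < ‖x‖} := hx
      have hx2' : x ∈ {x : EuclideanSpace ℝ (Fin d) | M < ‖x‖} := hx2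
      rw [indicator_of_mem hx' (fun x => maxFun P α b x ^ p),
        indicator_of_mem hx2' (fun x => (⨆ t ∈ Ioc (0:ℝ) (2*b*‖x‖),
          volume (Metric.ball x t) / P (Metric.ball x t)) ^ p)]
      refine ENNReal.rpow_le_rpow ?_ hp0.le
      refine iSup_le fun n => iSup_le fun hn => ?_
      rcases lt_or_ge 0 (qdist x (α n)) with hq | hq
      · have hbq : b * qdist x (α n) ∈ Ioc (0:ℝ) (2*b*‖x‖) := by
          constructor
          · exact mul_pos hb0 hq
          · have h1' := hqle n hn x
            have h2' : R ≤ ‖x‖ := le_trans (le_max_right M R) hx.le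
            nlinarith
        exact le_biSup (f := fun t => volume (Metric.ball x t) / P (Metric.ball x t)) hbq
      · have hq0 : qdist x (α n) = 0 := le_antisymm hq Metric.infDist_nonneg
        rw [hq0, mul_zero, Metric.ball_zero]
        simp
    · have hx' : x ∉ {x : EuclideanSpace ℝ (Fin d) | M' < ‖x‖} := hx
      rw [indicator_of_notMem hx' (fun x => maxFun P α b x ^ p)]
      exact zero_le
  -- compact part
  have compact : ∫⁻ x in {x : EuclideanSpace ℝ (Fin d) | M' < ‖x‖}ᶜ,
      maxFun P α b x ^ p ∂(Pdil P θ μ) < ⊤ := by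
    set K' := {x : EuclideanSpace ℝ (Fin d) | M' < ‖x‖}ᶜ with hK'def
    have hK'meas : MeasurableSet K' := hs1.compl
    have hWcover : ∀ x : EuclideanSpace ℝ (Fin d), ∃ n, x ∈ Wset P α b n := by
      intro x
      rcases eq_or_ne (maxFun P α b x) ⊤ with h | h
      · exact ⟨0, h⟩
      rcases le_or_gt (maxFun P α b x) 1 with h1' | h1'
      · exact ⟨1, h1'⟩
      · have hex : ∃ m : ℕ, maxFun P α b x ≤ 2^(m+1) := by
          obtain ⟨m, hm⟩ := ENNReal.exists_nat_gt h
          refine ⟨m, hm.le.trans ?_⟩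
          have hm2 : (m:ℝ≥0∞) ≤ 2^m := by exact_mod_cast (Nat.lt_two_pow_self).le
          refine hm2.trans ?_
          rw [pow_succ]
          exact le_mul_of_one_le_right' (by norm_num)
        have h2' : maxFun P α b x ≤ 2^(Nat.find hex + 1) := Nat.find_spec hex
        have h3' : (2:ℝ≥0∞)^(Nat.find hex) < maxFun P α b x := by
          rcases Nat.eq_zero_or_pos (Nat.find hex) with h0 | h0
          · rw [h0, pow_zero]
            exact h1'
          · have h4' := Nat.find_min hex (m := Nat.find hex - 1) (by omega)
            push_neg at h4'
            have hk1 : Nat.find hex - 1 + 1 = Nat.find hex := by omega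
            rwa [hk1] at h4'
        exact ⟨Nat.find hex + 2, h3', h2'⟩
    have hWmeas : ∀ n, MeasurableSet (Wset P α b n) := by
      intro n
      match n with
      | 0 => exact hψm (measurableSet_singleton ⊤)
      | 1 => exact measurableSet_le hψm measurable_const
      | (k+2) =>
        have he : Wset P α b (k+2) = {x | (2:ℝ≥0∞)^k < maxFun P α b x}
            ∩ {x | maxFun P α b x ≤ 2^(k+1)} := by
          ext x
          simp only [Wset, Set.mem_inter_iff, Set.mem_setOf_eq]
        rw [he]
        exact (measurableSet_lt measurable_const hψm).inter
          (measurableSet_le hψm measurable_const)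
    have hK'sub : ∀ n : ℕ, (K' ∩ {x | (2:ℝ≥0∞)^n < maxFun P α b x})
        = {x | ‖x‖ ≤ M' ∧ (2:ℝ≥0∞)^n < maxFun P α b x} := by
      intro n
      ext x
      simp [hK'def, not_lt]
    have hbound : ∀ n : ℕ,
        Pdil P θ μ (K' ∩ {x | (2:ℝ≥0∞)^n < maxFun P α b x}) ≤ C₄/2^n := by
      intro n
      rw [hK'sub n]
      exact hνweak n
    have hW0 : Pdil P θ μ (K' ∩ Wset P α b 0) = 0 := by
      by_contra h
      have ha : ∀ n : ℕ, Pdil P θ μ (K' ∩ Wset P α b 0) ≤ C₄/2^n := by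
        intro n
        refine le_trans (measure_mono ?_) (hbound n)
        rintro x ⟨hx1, hx2⟩
        have hx3 : maxFun P α b x = ⊤ := hx2
        refine ⟨hx1, ?_⟩
        show (2:ℝ≥0∞)^n < maxFun P α b x
        rw [hx3]
        exact ENNReal.pow_lt_top (by norm_num)
      obtain ⟨m, hm⟩ := ENNReal.exists_nat_gt
        ((ENNReal.div_lt_top hC₄top h).ne)
      have h1' : Pdil P θ μ (K' ∩ Wset P α b 0) * 2^m ≤ C₄ :=
        (ENNReal.le_div_iff_mul_le (Or.inl (pow_ne_zero _ (by norm_num)))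
          (Or.inl (ENNReal.pow_lt_top (by norm_num)).ne)).1 (ha m)
      have h2' : (2:ℝ≥0∞)^m ≤ C₄ / Pdil P θ μ (K' ∩ Wset P α b 0) :=
        (ENNReal.le_div_iff_mul_le (Or.inl h) (Or.inr hC₄top)).2 (by rwa [mul_comm])
      have h3' : (m:ℝ≥0∞) < 2^m := by exact_mod_cast Nat.lt_two_pow_self
      exact absurd (h3'.trans_le h2') (not_lt.2 hm.le)
    have hcov2 : K' ⊆ ⋃ n, (K' ∩ Wset P α b n) := by
      intro x hx
      obtain ⟨n, hn⟩ := hWcover x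
      exact mem_iUnion.2 ⟨n, hx, hn⟩
    have hsplit : ∫⁻ x in K', maxFun P α b x ^ p ∂(Pdil P θ μ)
        ≤ ∑' n, ∫⁻ x in K' ∩ Wset P α b n, maxFun P α b x ^ p ∂(Pdil P θ μ) :=
      le_trans (lintegral_mono_set hcov2) (lintegral_iUnion_le _ _)
    have hterm : ∀ n, ∫⁻ x in K' ∩ Wset P α b n, maxFun P α b x ^ p ∂(Pdil P θ μ)
        ≤ BndSeq C₄ p n := by
      intro n
      match n with
      | 0 =>
        rw [setLIntegral_measure_zero _ _ hW0]
        exact le_rfl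
      | 1 =>
        have hle1 : ∫⁻ x in K' ∩ Wset P α b 1, maxFun P α b x ^ p ∂(Pdil P θ μ)
            ≤ ∫⁻ _x in K' ∩ Wset P α b 1, (1:ℝ≥0∞) ∂(Pdil P θ μ) :=
          setLIntegral_mono' (hK'meas.inter (hWmeas 1))
            (fun x hx => ENNReal.rpow_le_one hx.2 hp0.le)
        refine hle1.trans ?_
        rw [setLIntegral_one]
        calc Pdil P θ μ (K' ∩ Wset P α b 1) ≤ Pdil P θ μ univ := measure_mono (subset_univ _)
          _ = 1 := hν1
      | (k+2) =>
        have hle1 : ∫⁻ x in K' ∩ Wset P α b (k+2), maxFun P α b x ^ p ∂(Pdil P θ μ)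
            ≤ ∫⁻ _x in K' ∩ Wset P α b (k+2), ((2:ℝ≥0∞)^(k+1)) ^ p ∂(Pdil P θ μ) :=
          setLIntegral_mono' (hK'meas.inter (hWmeas (k+2)))
            (fun x hx => ENNReal.rpow_le_rpow hx.2.2 hp0.le)
        refine hle1.trans ?_
        rw [setLIntegral_const]
        refine mul_le_mul_right ?_ _
        refine le_trans (measure_mono ?_) (hbound k)
        exact inter_subset_inter_right _ (fun x hx => hx.1)
    have hq1 : (2:ℝ≥0∞) ^ (p - 1) < 1 :=
      ENNReal.rpow_lt_one_of_one_lt_of_neg (by norm_num) (by linarith)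
    have hBnd_k : ∀ k : ℕ, BndSeq C₄ p (k+2) ≤ (C₄ * 2^p) * ((2:ℝ≥0∞)^(p-1))^k := by
      intro k
      have e1 : ((2:ℝ≥0∞)^(k+1)) ^ p = (2:ℝ≥0∞) ^ (((k:ℝ)+1) * p) := by
        rw [← ENNReal.rpow_natCast 2 (k+1), ← ENNReal.rpow_mul]
        push_cast
        ring_nf
      have e2 : (C₄ / 2^k) = C₄ * (2:ℝ≥0∞) ^ (-(k:ℝ)) := by
        rw [div_eq_mul_inv, ← ENNReal.rpow_natCast 2 k, ← ENNReal.rpow_neg]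
      have e3 : ((2:ℝ≥0∞)^(p-1))^k = (2:ℝ≥0∞) ^ ((p-1) * (k:ℝ)) := by
        rw [← ENNReal.rpow_natCast ((2:ℝ≥0∞)^(p-1)) k, ← ENNReal.rpow_mul]
      have hBdef : BndSeq C₄ p (k+2) = ((2:ℝ≥0∞)^(k+1)) ^ p * (C₄ / 2^k) := rfl
      rw [hBdef, e1, e2, e3]
      refine le_of_eq ?_
      have harith : ((k:ℝ)+1)*p + (-(k:ℝ)) = p + (p-1)*(k:ℝ) := by ring
      calc (2:ℝ≥0∞) ^ (((k:ℝ)+1) * p) * (C₄ * 2 ^ (-(k:ℝ)))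
          = C₄ * ((2:ℝ≥0∞) ^ (((k:ℝ)+1) * p) * 2 ^ (-(k:ℝ))) := by ring
        _ = C₄ * (2:ℝ≥0∞) ^ (((k:ℝ)+1)*p + (-(k:ℝ))) := by
            rw [← ENNReal.rpow_add _ _ (by norm_num) (by norm_num)]
        _ = C₄ * (2:ℝ≥0∞) ^ (p + (p-1)*(k:ℝ)) := by rw [harith]
        _ = C₄ * ((2:ℝ≥0∞)^p * 2^((p-1)*(k:ℝ))) := by
            rw [ENNReal.rpow_add _ _ (by norm_num) (by norm_num)]
        _ = C₄ * (2:ℝ≥0∞)^p * 2^((p-1)*(k:ℝ)) := by ring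
    have hsum2 : ∑' k : ℕ, BndSeq C₄ p (k+2) ≤ (C₄ * 2^p) * (1 - (2:ℝ≥0∞)^(p-1))⁻¹ := by
      calc ∑' k : ℕ, BndSeq C₄ p (k+2)
          ≤ ∑' k : ℕ, (C₄ * 2^p) * ((2:ℝ≥0∞)^(p-1))^k :=
            ENNReal.tsum_le_tsum hBnd_k
        _ = (C₄ * 2^p) * ∑' k : ℕ, ((2:ℝ≥0∞)^(p-1))^k := ENNReal.tsum_mul_left
        _ = (C₄ * 2^p) * (1 - (2:ℝ≥0∞)^(p-1))⁻¹ := by rw [ENNReal.tsum_geometric]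
    have hsumB : ∑' n, BndSeq C₄ p n ≤ 1 + (C₄ * 2^p) * (1 - (2:ℝ≥0∞)^(p-1))⁻¹ := by
      have hA : ∑' n, BndSeq C₄ p n = BndSeq C₄ p 0 + ∑' n, BndSeq C₄ p (n+1) :=
        tsum_eq_zero_add' ENNReal.summable
      have hB : ∑' n : ℕ, BndSeq C₄ p (n+1) = BndSeq C₄ p 1 + ∑' n : ℕ, BndSeq C₄ p (n+1+1) :=
        tsum_eq_zero_add' ENNReal.summable
      rw [hA, hB]
      have hB0 : BndSeq C₄ p 0 = 0 := rfl
      have hB1 : BndSeq C₄ p 1 = 1 := rfl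
      rw [hB0, hB1, zero_add]
      exact add_le_add le_rfl hsum2

    have hfin : (1 : ℝ≥0∞) + (C₄ * 2^p) * (1 - (2:ℝ≥0∞)^(p-1))⁻¹ ≠ ⊤ := by
      refine ENNReal.add_ne_top.2 ⟨one_ne_top, ENNReal.mul_ne_top
        (ENNReal.mul_ne_top hC₄top (ENNReal.rpow_lt_top_of_nonneg hp0.le (by norm_num)).ne) ?_⟩
      rw [ENNReal.inv_ne_top]
      exact (tsub_pos_of_lt hq1).ne'
    calc ∫⁻ x in K', maxFun P α b x ^ p ∂(Pdil P θ μ)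
        ≤ ∑' n, ∫⁻ x in K' ∩ Wset P α b n, maxFun P α b x ^ p ∂(Pdil P θ μ) := hsplit
      _ ≤ ∑' n, BndSeq C₄ p n := ENNReal.tsum_le_tsum hterm
      _ ≤ 1 + (C₄ * 2^p) * (1 - (2:ℝ≥0∞)^(p-1))⁻¹ := hsumB
      _ < ⊤ := lt_top_iff_ne_top.2 hfin
  calc ∫⁻ x, maxFun P α b x ^ p ∂(Pdil P θ μ)
      = (∫⁻ x in {x : EuclideanSpace ℝ (Fin d) | M' < ‖x‖},
          maxFun P α b x ^ p ∂(Pdil P θ μ))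
        + ∫⁻ x in {x : EuclideanSpace ℝ (Fin d) | M' < ‖x‖}ᶜ,
          maxFun P α b x ^ p ∂(Pdil P θ μ) := (lintegral_add_compl _ hs1).symm
    _ < ⊤ := ENNReal.add_lt_top.2 ⟨tail, compact⟩
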